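/- A locally finite tree T is nearly finite if and only if T does not contain a rake as a subtree. Equivalently: a locally finite tree has infinitely many vertices of degree at least 3 if and only if it contains a ray with infinitely many additional vertices each attached by an edge to distinct vertices of the ray. -/

import Mathlib

/-- A ray in a graph. -/
def IsRay {V : Type*} (G : SimpleGraph V) (r : ℕ → V) : Prop :=
  Function.Injective r ∧ ∀ n, G.Adj (r n) (r (n + 1))

/-- The graph contains a rake as a subtree: a ray together with infinitely many
further vertices, each attached by an edge to a distinct vertex of the ray. -/
def HasRake {V : Type*} (G : SimpleGraph V) : Prop :=
  ∃ r : ℕ → V, IsRay G r ∧ ∃ t : ℕ → V, Function.Injective t ∧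
    (∀ n, t n ∉ Set.range r) ∧ ∃ a : ℕ → ℕ, StrictMono a ∧ ∀ n, G.Adj (t n) (r (a n))

section Aux

open SimpleGraph

variable {V : Type*} {G : SimpleGraph V}

/-- Dependent choice over ℕ. -/
private lemma nat_dc {α : Type*} (P : ℕ → α → Prop) (R : α → α → Prop)
    (h0 : ∃ x, P 0 x) (hstep : ∀ k x, P k x → ∃ y, R x y ∧ P (k + 1) y) :
    ∃ v : ℕ → α, (∀ k, P k (v k)) ∧ ∀ k, R (v k) (v (k + 1)) := by
  choose f hf1 hf2 using hstep
  obtain ⟨x0, hx0⟩ := h0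
  let w : ∀ k : ℕ, {x : α // P k x} :=
    fun k => Nat.rec ⟨x0, hx0⟩ (fun n p => ⟨f n p.1 p.2, hf2 n p.1 p.2⟩) k
  exact ⟨fun k => (w k).1, fun k => (w k).2, fun k => hf1 k (w k).1 (w k).2⟩

/-- First step of a geodesic. -/
private lemma exists_adj_dist (hc : G.Connected) {x s : V} (h : G.dist x s ≠ 0) :
    ∃ y, G.Adj x y ∧ G.dist y s + 1 = G.dist x s := by
  obtain ⟨p, hp⟩ := SimpleGraph.exists_walk_of_dist_ne_zero h
  cases p with
  | nil => exact absurd SimpleGraph.dist_self h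
  | @cons _ y _ hadj q =>
      refine ⟨y, hadj, ?_⟩
      have h1 : G.dist y s ≤ q.length := SimpleGraph.dist_le q
      have h2 : G.dist x s ≤ G.dist x y + G.dist y s := hc.dist_triangle
      have h3 : G.dist x y = 1 := SimpleGraph.dist_eq_one_iff_adj.mpr hadj
      simp only [SimpleGraph.Walk.length_cons] at hp
      omega

/-- The inductive step for building the ray. -/
private lemma ray_step (hc : G.Connected) [∀ v : V, Fintype (G.neighborSet v)]
    {S : Set V} {v0 x : V} {k : ℕ} (hx : G.dist v0 x = k)
    (hA : {s | s ∈ S ∧ G.dist v0 s = k + G.dist x s}.Infinite) :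
    ∃ y, G.Adj x y ∧ G.dist v0 y = k + 1 ∧
      {s | s ∈ S ∧ G.dist v0 s = (k + 1) + G.dist y s}.Infinite := by
  set A := {s | s ∈ S ∧ G.dist v0 s = k + G.dist x s} with hAdef
  have hA' : (A \ {x}).Infinite := hA.diff (Set.finite_singleton x)
  have hstep : ∀ s ∈ A \ {x}, ∃ y, G.Adj x y ∧ G.dist y s + 1 = G.dist x s := by
    intro s hs
    apply exists_adj_dist hc
    intro h0
    exact hs.2 (((hc.dist_eq_zero_iff).mp h0).symm : s = x)
  choose! g hg1 hg2 using hstep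
  have hexy : ∃ y ∈ G.neighborFinset x, {s | s ∈ A \ {x} ∧ g s = y}.Infinite := by
    by_contra h
    push_neg at h
    have hsub : A \ {x} ⊆ ⋃ y ∈ G.neighborFinset x, {s | s ∈ A \ {x} ∧ g s = y} := by
      intro s hs
      have : g s ∈ G.neighborFinset x := by
        rw [SimpleGraph.mem_neighborFinset]; exact hg1 s hs
      exact Set.mem_biUnion this ⟨hs, rfl⟩
    have hfin : (⋃ y ∈ G.neighborFinset x, {s | s ∈ A \ {x} ∧ g s = y}).Finite :=
      Set.Finite.biUnion (G.neighborFinset x).finite_toSet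
        (fun y hy => h y hy)
    exact hA' (hfin.subset hsub)
  obtain ⟨y, hymem, hyinf⟩ := hexy
  have hyadj : G.Adj x y := (SimpleGraph.mem_neighborFinset _ _ _).mp hymem
  obtain ⟨s0, hs0⟩ := hyinf.nonempty
  have hs0A : s0 ∈ S ∧ G.dist v0 s0 = k + G.dist x s0 := hs0.1.1
  have hs0g : G.dist y s0 + 1 = G.dist x s0 := hs0.2 ▸ hg2 s0 hs0.1
  have hdy : G.dist v0 y = k + 1 := by
    have h1 : G.dist v0 s0 = k + G.dist x s0 := hs0A.2
    have h2 : G.dist v0 s0 ≤ G.dist v0 y + G.dist y s0 := hc.dist_triangle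
    have h3 : G.dist v0 y ≤ G.dist v0 x + G.dist x y := hc.dist_triangle
    have h4 : G.dist x y = 1 := SimpleGraph.dist_eq_one_iff_adj.mpr hyadj
    omega
  refine ⟨y, hyadj, hdy, hyinf.mono ?_⟩
  rintro s ⟨hs, hgs⟩
  have hsA : s ∈ S ∧ G.dist v0 s = k + G.dist x s := hs.1
  refine ⟨hsA.1, ?_⟩
  have h1 : G.dist v0 s = k + G.dist x s := hsA.2
  have h2 : G.dist (g s) s + 1 = G.dist x s := hg2 s hs
  rw [hgs] at h2
  omega

end Aux

open SimpleGraph in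
/-- A locally finite tree fails to be nearly finite (has infinitely many vertices of
degree at least 3) if and only if it contains a rake as a subtree. -/
theorem stmt_6 {V : Type*} (G : SimpleGraph V) (hG : G.IsTree)
    [∀ v, Fintype (G.neighborSet v)] :
    {v : V | 3 ≤ G.degree v}.Infinite ↔ HasRake G := by
  classical
  have hc : G.Connected := hG.isConnected
  constructor
  · -- forward direction
    intro hInf
    set S : Set V := {v : V | 3 ≤ G.degree v} with hSdef
    obtain ⟨v0, hv0S⟩ := hInf.nonempty
    -- build the ray
    obtain ⟨v, hP, hadj⟩ := nat_dc
      (P := fun k x => G.dist v0 x = k ∧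
        {s | s ∈ S ∧ G.dist v0 s = k + G.dist x s}.Infinite)
      (R := G.Adj)
      ⟨v0, by
        refine ⟨SimpleGraph.dist_self, ?_⟩
        have : {s | s ∈ S ∧ G.dist v0 s = 0 + G.dist v0 s} = S := by
          ext s; simp
        rw [this]; exact hInf⟩
      (fun k x hx => ray_step hc hx.1 hx.2)
    have hdist0 : ∀ k, G.dist v0 (v k) = k := fun k => (hP k).1
    have hAinf : ∀ k, {s | s ∈ S ∧ G.dist v0 s = k + G.dist (v k) s}.Infinite :=
      fun k => (hP k).2
    have hvinj : Function.Injective v := by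
      intro i j hij
      have := hdist0 i
      rw [hij, hdist0 j] at this
      exact this.symm
    -- distances along the ray
    have hdle : ∀ j m : ℕ, G.dist (v j) (v (j + m)) ≤ m := by
      intro j m
      induction m with
      | zero => simp [SimpleGraph.dist_self]
      | succ m ih =>
          have h1 : G.dist (v (j + m)) (v (j + m + 1)) = 1 :=
            SimpleGraph.dist_eq_one_iff_adj.mpr (hadj (j + m))
          have h2 : G.dist (v j) (v (j + (m + 1))) ≤
              G.dist (v j) (v (j + m)) + G.dist (v (j + m)) (v (j + m + 1)) := by
            have := hc.dist_triangle (u := v j) (v := v (j + m)) (w := v (j + m + 1))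
            simpa [← Nat.add_assoc] using this
          omega
    have hdray : ∀ j k : ℕ, j ≤ k → G.dist (v j) (v k) = k - j := by
      intro j k hjk
      obtain ⟨m, rfl⟩ := Nat.exists_eq_add_of_le hjk
      have h1 : G.dist (v j) (v (j + m)) ≤ m := hdle j m
      have h2 : G.dist v0 (v (j + m)) ≤ G.dist v0 (v j) + G.dist (v j) (v (j + m)) :=
        hc.dist_triangle
      rw [hdist0, hdist0] at h2
      omega
    have hdray' : ∀ j k : ℕ, G.dist (v j) (v k) = max j k - min j k := by
      intro j k
      rcases le_total j k with h | h
      · rw [hdray j k h]; omega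
      · rw [SimpleGraph.dist_comm, hdray k j h]; omega
    -- adjacency on the ray forces consecutive indices
    have hadjray : ∀ i j : ℕ, G.Adj (v i) (v j) → i + 1 = j ∨ j + 1 = i := by
      intro i j h
      have h1 : G.dist (v i) (v j) = 1 := SimpleGraph.dist_eq_one_iff_adj.mpr h
      rw [hdray' i j] at h1
      omega
    -- infinitely many ray vertices have degree ≥ 3
    have hB : ∀ K : ℕ, ∃ k, K ≤ k ∧ 1 ≤ k ∧ 3 ≤ G.degree (v k) := by
      intro K0
      by_contra hcon
      push_neg at hcon
      set K := max K0 1 with hK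
      have hK1 : 1 ≤ K := le_max_right _ _
      have hdeg2 : ∀ k, K ≤ k → G.degree (v k) ≤ 2 := by
        intro k hk
        have h1 : K0 ≤ k := le_trans (le_max_left _ _) hk
        have := hcon k h1 (le_trans hK1 hk)
        omega
      -- every witness ahead of v K lies on the ray
      have key : ∀ d : ℕ, ∀ k, K ≤ k → ∀ s ∈ S,
          G.dist v0 s = k + G.dist (v k) s → G.dist (v k) s = d → s = v (k + d) := by
        intro d
        induction d with
        | zero =>
            intro k hk s hs h1 h2
            have : v k = s := (hc.dist_eq_zero_iff).mp h2
            simpa [← this]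
        | succ d ih =>
            intro k hk s hs h1 h2
            obtain ⟨w, hw1, hw2⟩ := exists_adj_dist hc (x := v k) (s := s) (by omega)
            -- neighbors of v k are exactly v (k-1) and v (k+1)
            have hne : v (k - 1) ≠ v (k + 1) := by
              intro h; have := hvinj h; omega
            have hm1 : v (k - 1) ∈ G.neighborFinset (v k) := by
              rw [SimpleGraph.mem_neighborFinset]
              have := hadj (k - 1)
              have hkk : k - 1 + 1 = k := by omega
              rw [hkk] at this
              exact this.symm
            have hm2 : v (k + 1) ∈ G.neighborFinset (v k) := by
              rw [SimpleGraph.mem_neighborFinset]; exact hadj k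
            have hsubset : ({v (k - 1), v (k + 1)} : Finset V) ⊆ G.neighborFinset (v k) := by
              intro z hz
              simp only [Finset.mem_insert, Finset.mem_singleton] at hz
              rcases hz with rfl | rfl
              · exact hm1
              · exact hm2
            have hcard : (G.neighborFinset (v k)).card ≤ 2 := hdeg2 k hk
            have hcard2 : ({v (k - 1), v (k + 1)} : Finset V).card = 2 := by
              rw [Finset.card_insert_of_notMem (by simpa using hne), Finset.card_singleton]
            have heq : ({v (k - 1), v (k + 1)} : Finset V) = G.neighborFinset (v k) :=
              Finset.eq_of_subset_of_card_le hsubset (by omega)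
            have hwmem : w ∈ ({v (k - 1), v (k + 1)} : Finset V) := by
              rw [heq, SimpleGraph.mem_neighborFinset]; exact hw1
            simp only [Finset.mem_insert, Finset.mem_singleton] at hwmem
            have hwk : w = v (k + 1) := by
              rcases hwmem with rfl | rfl
              · exfalso
                have h3 : G.dist v0 s ≤ G.dist v0 (v (k - 1)) + G.dist (v (k - 1)) s :=
                  hc.dist_triangle
                rw [hdist0] at h3
                omega
              · rfl
            subst hwk
            have h4 : s = v (k + 1 + d) := by
              apply ih (k + 1) (by omega) s hs <;> omega
            rw [h4]; congr 1; omega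
      -- contradiction: take any witness ahead of v K
      obtain ⟨s, hsS, hsd⟩ := (hAinf K).nonempty
      have hsv : s = v (K + G.dist (v K) s) := key _ K le_rfl s hsS hsd rfl
      have : 3 ≤ G.degree (v (K + G.dist (v K) s)) := by rw [← hsv]; exact hsS
      have h5 : G.degree (v (K + G.dist (v K) s)) ≤ 2 := hdeg2 _ (by omega)
      omega
    -- the set of branch indices is infinite
    have hBinf : {k : ℕ | 1 ≤ k ∧ 3 ≤ G.degree (v k)}.Infinite := by
      apply Set.infinite_of_not_bddAbove
      rintro ⟨b, hb⟩
      obtain ⟨k, hk1, hk2, hk3⟩ := hB (b + 1)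
      have : k ≤ b := hb ⟨hk2, hk3⟩
      omega
    set p : ℕ → Prop := fun k => 1 ≤ k ∧ 3 ≤ G.degree (v k) with hp
    have hpinf : (setOf p).Infinite := hBinf
    set a : ℕ → ℕ := fun n => Nat.nth p n with ha
    have hamono : StrictMono a := Nat.nth_strictMono hpinf
    have hamem : ∀ n, p (a n) := fun n => Nat.nth_mem_of_infinite hpinf n
    have ha1 : ∀ n, 1 ≤ a n := fun n => (hamem n).1
    -- choose teeth
    have htex : ∀ n : ℕ, ∃ x, G.Adj (v (a n)) x ∧ x ≠ v (a n - 1) ∧ x ≠ v (a n + 1) := by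
      intro n
      have hdeg : 3 ≤ (G.neighborFinset (v (a n))).card := (hamem n).2
      have hpos : 0 < (((G.neighborFinset (v (a n))).erase (v (a n - 1))).erase
          (v (a n + 1))).card := by
        have e1 := Finset.pred_card_le_card_erase
          (s := G.neighborFinset (v (a n))) (a := v (a n - 1))
        have e2 := Finset.pred_card_le_card_erase
          (s := (G.neighborFinset (v (a n))).erase (v (a n - 1))) (a := v (a n + 1))
        omega
      obtain ⟨x, hx⟩ := Finset.card_pos.mp hpos
      simp only [Finset.mem_erase, SimpleGraph.mem_neighborFinset] at hx
      exact ⟨x, hx.2.2, hx.2.1, hx.1⟩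
    choose t ht1 ht2 ht3 using htex
    -- teeth are off the ray
    have htoff : ∀ n, t n ∉ Set.range v := by
      rintro n ⟨m, hm⟩
      have h := ht1 n
      rw [← hm] at h
      rcases hadjray (a n) m h.symm.symm with h1 | h1
      · exact ht3 n (by rw [← hm, ← h1])
      · exact ht2 n (by rw [← hm]; congr 1; omega)
    -- teeth are injective
    have htinj : Function.Injective t := by
      intro n m hnm
      by_contra hne
      have hanm : a n ≠ a m := fun h => hne (hamono.injective h)
      -- wlog a n < a m
      have main : ∀ i j : ℕ, i < j → ∀ x : V, x ∉ Set.range v →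
          G.Adj x (v i) → G.Adj x (v j) → False := by
        intro i j hij x hxoff hxi hxj
        have hdij : G.dist (v i) (v j) = j - i := hdray i j (le_of_lt hij)
        have hxvi : x ≠ v i := fun h => hxoff ⟨i, h.symm⟩
        have hxvj : x ≠ v j := fun h => hxoff ⟨j, h.symm⟩
        rcases Nat.lt_or_ge j (i + 3) with hj3 | hj3
        · -- j = i + 1 or j = i + 2 : two distinct paths from v i to v j
          have hvij : v i ≠ v j := fun h => by have := hvinj h; omega
          have hj12 : j = i + 1 ∨ j = i + 2 := by omega
          rcases hj12 with rfl | rfl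
          · -- j = i + 1
            have p1 : G.Walk (v i) (v (i + 1)) := SimpleGraph.Walk.cons (hadj i)
              SimpleGraph.Walk.nil
            have p2 : G.Walk (v i) (v (i + 1)) := SimpleGraph.Walk.cons hxi.symm
              (SimpleGraph.Walk.cons hxj SimpleGraph.Walk.nil)
            have hp1 : (SimpleGraph.Walk.cons (hadj i)
                (SimpleGraph.Walk.nil : G.Walk (v (i+1)) (v (i+1)))).IsPath := by
              rw [SimpleGraph.Walk.isPath_def]
              simp [hvij]
            have hp2 : (SimpleGraph.Walk.cons hxi.symm
                (SimpleGraph.Walk.cons hxj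
                  (SimpleGraph.Walk.nil : G.Walk (v (i+1)) (v (i+1))))).IsPath := by
              rw [SimpleGraph.Walk.isPath_def]
              simp [hvij, hxvi.symm, hxvj]
            obtain ⟨q, -, hq⟩ := hG.existsUnique_path (v i) (v (i + 1))
            have := (hq _ hp1).trans (hq _ hp2).symm
            have hsup := congrArg SimpleGraph.Walk.support this
            simp at hsup
          · -- j = i + 2
            have hmid1 : v i ≠ v (i + 1) := fun h => by have := hvinj h; omega
            have hmid2 : v (i + 1) ≠ v (i + 2) := fun h => by have := hvinj h; omega
            have hxv1 : x ≠ v (i + 1) := fun h => hxoff ⟨i + 1, h.symm⟩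
            have hp1 : (SimpleGraph.Walk.cons (hadj i)
                (SimpleGraph.Walk.cons (hadj (i + 1))
                  (SimpleGraph.Walk.nil : G.Walk (v (i+2)) (v (i+2))))).IsPath := by
              rw [SimpleGraph.Walk.isPath_def]
              simp [hvij, hmid1, hmid2]
            have hp2 : (SimpleGraph.Walk.cons hxi.symm
                (SimpleGraph.Walk.cons hxj
                  (SimpleGraph.Walk.nil : G.Walk (v (i+2)) (v (i+2))))).IsPath := by
              rw [SimpleGraph.Walk.isPath_def]
              simp [hvij, hxvi.symm, hxvj]
            obtain ⟨q, -, hq⟩ := hG.existsUnique_path (v i) (v (i + 2))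
            have := (hq _ hp1).trans (hq _ hp2).symm
            have hsup := congrArg SimpleGraph.Walk.support this
            simp [hxv1.symm] at hsup
        · -- j ≥ i + 3 : distance contradiction
          have h1 : G.dist (v i) (v j) ≤ G.dist (v i) x + G.dist x (v j) := hc.dist_triangle
          have h2 : G.dist (v i) x = 1 := SimpleGraph.dist_eq_one_iff_adj.mpr hxi.symm
          have h3 : G.dist x (v j) = 1 := SimpleGraph.dist_eq_one_iff_adj.mpr hxj
          omega
      rcases lt_or_gt_of_ne hanm with h | h
      · exact main (a n) (a m) h (t n) (htoff n) (ht1 n).symm (by rw [hnm]; exact (ht1 m).symm)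
      · exact main (a m) (a n) h (t n) (htoff n) (by rw [hnm]; exact (ht1 m).symm) (ht1 n).symm
    exact ⟨v, ⟨hvinj, hadj⟩, t, htinj, htoff, a, hamono, fun n => (ht1 n).symm⟩
  · -- backward direction
    rintro ⟨r, ⟨hrinj, hradj⟩, t, htinj, htnr, a, ha, hta⟩
    apply Set.infinite_of_injective_forall_mem (f := fun n : ℕ => r (a (n + 1)))
    · intro i j hij
      have := hrinj hij
      have := ha.injective this
      omega
    · intro n
      set k := a (n + 1) with hk
      have hk1 : 1 ≤ k := le_trans (Nat.succ_le_succ (Nat.zero_le n)) ha.le_apply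
      have h1 : G.Adj (r k) (r (k - 1)) := by
        have := hradj (k - 1)
        have hkk : k - 1 + 1 = k := by omega
        rw [hkk] at this
        exact this.symm
      have h2 : G.Adj (r k) (r (k + 1)) := hradj k
      have h3 : G.Adj (r k) (t (n + 1)) := (hta (n + 1)).symm
      have hne1 : r (k - 1) ≠ r (k + 1) := fun h => by have := hrinj h; omega
      have hne2 : r (k - 1) ≠ t (n + 1) := fun h => htnr (n + 1) ⟨k - 1, h⟩
      have hne3 : r (k + 1) ≠ t (n + 1) := fun h => htnr (n + 1) ⟨k + 1, h⟩
      have hsubset : ({r (k - 1), r (k + 1), t (n + 1)} : Finset V) ⊆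
          G.neighborFinset (r k) := by
        intro z hz
        simp only [Finset.mem_insert, Finset.mem_singleton] at hz
        rcases hz with rfl | rfl | rfl
        · exact (SimpleGraph.mem_neighborFinset _ _ _).mpr h1
        · exact (SimpleGraph.mem_neighborFinset _ _ _).mpr h2
        · exact (SimpleGraph.mem_neighborFinset _ _ _).mpr h3
      have hcard : ({r (k - 1), r (k + 1), t (n + 1)} : Finset V).card = 3 := by
        rw [Finset.card_insert_of_notMem (by simp [hne1, hne2]),
          Finset.card_insert_of_notMem (by simp [hne3]), Finset.card_singleton]
      have := Finset.card_le_card hsubset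
      rw [hcard] at this
      exact this
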